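/- (Robustness of contracting systems, scalar case) Suppose f : R × R → R satisfies ∂f/∂x(x,t) ≤ -β for all x, t, with β > 0, and R : R → R is bounded by D. If x solves ẋ = f(x,t) and y solves ẏ = f(y,t) + R(t), then for all t ≥ 0, |y(t) - x(t)| ≤ e^{-βt}|y(0) - x(0)| + D/β. -/
import Mathlib

open Set Filter Real Topology

/-- Robustness of contracting scalar systems: a solution of the perturbed system
converges to a `D/β` neighborhood of the unperturbed solution. -/
theorem contraction_robustness (f f' : ℝ → ℝ → ℝ) (β D : ℝ) (hβ : 0 < β)
    (hf' : ∀ x t, HasDerivAt (fun x => f x t) (f' x t) x)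
    (hcontr : ∀ x t, f' x t ≤ -β)
    (R : ℝ → ℝ) (hR : ∀ t, |R t| ≤ D)
    (x y : ℝ → ℝ)
    (hx : ∀ t, HasDerivAt x (f (x t) t) t)
    (hy : ∀ t, HasDerivAt y (f (y t) t + R t) t) :
    ∀ t, 0 ≤ t → |y t - x t| ≤ Real.exp (-β * t) * |y 0 - x 0| + D / β := by
  have hD : 0 ≤ D := (abs_nonneg _).trans (hR 0)
  set e : ℝ → ℝ := fun s => y s - x s with he_def
  set e' : ℝ → ℝ := fun s => f (y s) s + R s - f (x s) s with he'_def
  have he : ∀ s, HasDerivAt e (e' s) s := fun s => (hy s).sub (hx s)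
  have hecont : Continuous e := by
    refine continuous_iff_continuousAt.2 fun s => (he s).continuousAt
  -- Mean value inequality
  have mvt : ∀ a b t, a < b → f b t - f a t ≤ -β * (b - a) := by
    intro a b t hab
    obtain ⟨c, _, hc⟩ := exists_hasDerivAt_eq_slope (fun z => f z t) (fun z => f' z t) hab
      (fun z _ => ((hf' z t).continuousAt).continuousWithinAt) (fun z _ => hf' z t)
    have : (f b t - f a t) / (b - a) ≤ -β := hc ▸ hcontr c t
    calc f b t - f a t = (f b t - f a t) / (b - a) * (b - a) := by
          rw [div_mul_cancel₀ _ (sub_ne_zero.2 hab.ne')]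
      _ ≤ -β * (b - a) := by
          exact mul_le_mul_of_nonneg_right this (le_of_lt (sub_pos.2 hab))
  -- the Dini-derivative bound function for |e|
  set g : ℝ → ℝ := fun s => if 0 < e s then e' s else if e s < 0 then -(e' s) else |e' s|
    with hg_def
  intro T hT
  have key := le_gronwallBound_of_liminf_deriv_right_le (f := fun s => |e s|) (f' := g)
    (δ := |e 0|) (K := -β) (ε := D) (a := 0) (b := T)
    (hecont.abs.continuousOn)
    (by
      intro s _ r hr
      rcases lt_trichotomy (e s) 0 with hneg | hzero | hpos
      · -- e s < 0 : |e| = -e near s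
        have hg : g s = -(e' s) := by
          simp [hg_def, hneg, not_lt.2 hneg.le]
        rw [hg] at hr
        have hfreq : ∃ᶠ z in 𝓝[>] s, slope (fun z => -(e z)) s z < r :=
          HasDerivWithinAt.liminf_right_slope_le
            (((he s).neg).hasDerivWithinAt) hr
        have hev : ∀ᶠ z in 𝓝[>] s, e z < 0 :=
          eventually_nhdsWithin_of_eventually_nhds
            (ContinuousAt.eventually_lt (hecont.continuousAt (x := s)) continuousAt_const hneg)
        refine (hfreq.and_eventually hev).mono ?_
        rintro z ⟨hz1, hz2⟩
        rw [slope_def_field] at hz1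
        show (z - s)⁻¹ * (|e z| - |e s|) < r
        rw [abs_of_neg hz2, abs_of_neg hneg]
        calc (z - s)⁻¹ * (-(e z) - -(e s)) = (-(e z) - -(e s)) / (z - s) := by ring
          _ < r := hz1
      · -- e s = 0
        have hg : g s = |e' s| := by simp [hg_def, hzero]
        rw [hg] at hr
        have := HasDerivWithinAt.liminf_right_slope_norm_le
          ((he s).hasDerivWithinAt) (by rwa [Real.norm_eq_abs])
        refine this.mono fun z hz => ?_
        simpa [Real.norm_eq_abs] using hz
      · -- 0 < e s
        have hg : g s = e' s := by simp [hg_def, hpos]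
        rw [hg] at hr
        have hfreq : ∃ᶠ z in 𝓝[>] s, slope e s z < r :=
          HasDerivWithinAt.liminf_right_slope_le ((he s).hasDerivWithinAt) hr
        have hev : ∀ᶠ z in 𝓝[>] s, 0 < e z :=
          eventually_nhdsWithin_of_eventually_nhds
            (ContinuousAt.eventually_lt continuousAt_const (hecont.continuousAt (x := s)) hpos)
        refine (hfreq.and_eventually hev).mono ?_
        rintro z ⟨hz1, hz2⟩
        rw [slope_def_field] at hz1
        show (z - s)⁻¹ * (|e z| - |e s|) < r
        rw [abs_of_pos hz2, abs_of_pos hpos]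
        calc (z - s)⁻¹ * (e z - e s) = (e z - e s) / (z - s) := by ring
          _ < r := hz1)
    le_rfl
    (by
      intro s _
      rcases lt_trichotomy (e s) 0 with hneg | hzero | hpos
      · have hg : g s = -(e' s) := by simp [hg_def, hneg, not_lt.2 hneg.le]
        have hxy : y s < x s := by simpa [he_def, sub_neg] using hneg
        have hm := mvt (y s) (x s) s hxy
        show g s ≤ -β * |e s| + D
        rw [hg, abs_of_neg hneg]
        have : -(e' s) = (f (x s) s - f (y s) s) + (-(R s)) := by
          simp only [he'_def]; ring
        rw [this]
        have h1 : f (x s) s - f (y s) s ≤ -β * (x s - y s) := hm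
        have h2 : -(R s) ≤ D := (neg_le_abs _).trans (hR s)
        have : -β * (x s - y s) = -β * -e s := by simp only [he_def]; ring
        linarith [this ▸ h1]
      · have hg : g s = |e' s| := by simp [hg_def, hzero]
        have hxy : y s = x s := by
          have := sub_eq_zero.1 hzero; exact this
        have : e' s = R s := by simp [he'_def, hxy]
        show g s ≤ -β * |e s| + D
        rw [hg, this, hzero]
        simpa using hR s
      · have hg : g s = e' s := by simp [hg_def, hpos]
        have hxy : x s < y s := by simpa [he_def, sub_pos] using hpos
        have hm := mvt (x s) (y s) s hxy
        show g s ≤ -β * |e s| + D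
        rw [hg, abs_of_pos hpos]
        have h2 : R s ≤ D := (le_abs_self _).trans (hR s)
        have : e' s = (f (y s) s - f (x s) s) + R s := by simp only [he'_def]; ring
        rw [this]
        have : -β * (y s - x s) = -β * e s := by simp only [he_def]
        linarith [this ▸ hm])
    T ⟨hT, le_rfl⟩
  rw [gronwallBound_of_K_ne_0 (by linarith : -β ≠ (0:ℝ))] at key
  simp only [sub_zero] at key
  refine key.trans ?_
  have h1 : |e 0| * Real.exp (-β * T) = Real.exp (-β * T) * |y 0 - x 0| := by
    rw [mul_comm]
  have h2 : D / -β * (Real.exp (-β * T) - 1) ≤ D / β := by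
    have : D / -β * (Real.exp (-β * T) - 1) = D / β * (1 - Real.exp (-β * T)) := by
      rw [div_neg]; ring
    rw [this]
    have hβ' : 0 ≤ D / β := div_nonneg hD hβ.le
    nlinarith [Real.exp_pos (-β * T)]
  rw [h1]
  linarith
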